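/- Let G be a finite p-group and let N and M be normal subgroups of G. If N ≤ M[N,G]N^p, then N ≤ M. -/

import Mathlib

/-- Commutator `[x, y] = x⁻¹ * y⁻¹ * x * y`. -/
def comm' {G : Type*} [Group G] (x y : G) : G := x⁻¹ * y⁻¹ * x * y

/-- `spow H n` is the subgroup `H^n` generated by all `n`-th powers of elements of `H`. -/
def spow {G : Type*} [Group G] (H : Subgroup G) (n : ℕ) : Subgroup G :=
  Subgroup.closure {x | ∃ h ∈ H, x = h ^ n}

theorem spow_map_le {G H : Type*} [Group G] [Group H] (f : G →* H) (N : Subgroup G) (p : ℕ) :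
    (spow N p).map f ≤ spow (N.map f) p := by
  rw [spow, MonoidHom.map_closure]
  apply Subgroup.closure_mono
  rintro x ⟨y, ⟨h, hh, rfl⟩, rfl⟩
  exact ⟨f h, ⟨h, hh, rfl⟩, map_pow f h p⟩

/-- An abelian subgroup of a finite `p`-group contained in its own subgroup of `p`-th powers
is trivial. -/
theorem abelian_spow_eq_bot (p : ℕ) (hp : p.Prime) {Q : Type*} [Group Q] [Finite Q]
    (hQ : IsPGroup p Q) (A : Subgroup Q) (hab : ∀ x ∈ A, ∀ y ∈ A, x * y = y * x)
    (h : A ≤ spow A p) : A = ⊥ := by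
  -- the p-th power map on A is a monoid hom
  let ψ : A →* A :=
    { toFun := fun a => a ^ p
      map_one' := one_pow p
      map_mul' := fun a b => by
        have : Commute a b := Subtype.ext_iff.mpr <| by
          simpa using hab a.1 a.2 b.1 b.2
        exact this.mul_pow p }
  -- ψ is surjective
  have hsurj : Function.Surjective ψ := by
    have hle : spow A p ≤ Subgroup.map A.subtype ψ.range := by
      rw [spow, Subgroup.closure_le]
      rintro x ⟨g, hg, rfl⟩
      exact ⟨(⟨g, hg⟩ : A) ^ p, ⟨⟨g, hg⟩, rfl⟩, rfl⟩
    intro z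
    obtain ⟨a, ⟨w, hw⟩, hav⟩ := hle (h z.2)
    exact ⟨w, by rw [hw]; exact Subtype.ext hav⟩
  have hinj : Function.Injective ψ := Finite.injective_iff_surjective.mpr hsurj
  -- every element of A is trivial
  have hA : IsPGroup p A := hQ.to_subgroup A
  have key : ∀ a : A, a = 1 := by
    intro a
    obtain ⟨k, hk⟩ := hA a
    induction k generalizing a with
    | zero => simpa using hk
    | succ k ih =>
      refine ih _ (hinj ?_)
      show (a ^ p ^ k) ^ p = (1 : A) ^ p
      rw [← pow_mul, one_pow, ← pow_succ, hk]
  rw [eq_bot_iff]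
  intro x hx
  have := key ⟨x, hx⟩
  simpa [Subtype.ext_iff] using this

open scoped commutatorElement in
/-- Core lemma: if `N ≤ ⁅N,G⁆N^p` for a normal subgroup of a finite `p`-group, then `N = ⊥`. -/
theorem core_eq_bot (p : ℕ) (hp : p.Prime) (G : Type*) [Group G] [Finite G]
    (hG : IsPGroup p G) (N : Subgroup G) (hN : N.Normal)
    (h : N ≤ ⁅N, (⊤ : Subgroup G)⁆ ⊔ spow N p) : N = ⊥ := by
  haveI := hN
  set W : Subgroup G := ⁅N, (⊤ : Subgroup G)⁆ with hWdef
  haveI : W.Normal := Subgroup.commutator_normal N ⊤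
  -- Step 1: N ≤ W
  have hNW : N ≤ W := by
    set π := QuotientGroup.mk' W
    set A := N.map π with hA
    have hπW : W.map π = ⊥ :=
      (Subgroup.map_eq_bot_iff _).mpr (by rw [QuotientGroup.ker_mk'])
    have hab : ∀ x ∈ A, ∀ y ∈ A, x * y = y * x := by
      rintro x ⟨n₁, hn₁, rfl⟩ y ⟨n₂, hn₂, rfl⟩
      rw [← commutatorElement_eq_one_iff_mul_comm, ← map_commutatorElement]
      have : ⁅n₁, n₂⁆ ∈ W := Subgroup.commutator_mem_commutator hn₁ (Subgroup.mem_top n₂)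
      rwa [← MonoidHom.mem_ker, QuotientGroup.ker_mk']
    have hAle : A ≤ spow A p := by
      calc A ≤ (W ⊔ spow N p).map π := Subgroup.map_mono h
        _ = W.map π ⊔ (spow N p).map π := Subgroup.map_sup _ _ _
        _ ≤ ⊥ ⊔ spow A p := sup_le_sup hπW.le (spow_map_le π N p)
        _ = spow A p := bot_sup_eq _
    have : A = ⊥ := abelian_spow_eq_bot p hp (hG.to_quotient W) A hab hAle
    rw [hA, Subgroup.map_eq_bot_iff _, QuotientGroup.ker_mk'] at this
    exact this
  -- Step 2: nilpotency forces N = ⊥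
  haveI : Fact p.Prime := ⟨hp⟩
  have hnil : Group.IsNilpotent G := hG.isNilpotent
  obtain ⟨n, hn⟩ := nilpotent_iff_lowerCentralSeries.mp hnil
  have claim : ∀ n, N ≤ (⊤ : Subgroup G).lowerCentralSeries n := by
    intro n
    induction n with
    | zero => rw [Subgroup.lowerCentralSeries_zero]; exact le_top
    | succ n ih =>
      calc N ≤ W := hNW
        _ ≤ ⁅(⊤ : Subgroup G).lowerCentralSeries n, (⊤ : Subgroup G)⁆ :=
          Subgroup.commutator_mono ih le_rfl
        _ = (⊤ : Subgroup G).lowerCentralSeries (n + 1) := by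
          rw [Subgroup.lowerCentralSeries_succ]
  exact le_antisymm (hn ▸ claim n) bot_le

/-- **Lemma.** Let `G` be a finite `p`-group and `N`, `M` normal subgroups of `G`.
If `N ≤ M[N,G]N^p` then `N ≤ M`. -/
theorem le_of_le_mul_comm_mul_pow (p : ℕ) (hp : p.Prime) (G : Type*) [Group G] [Finite G]
    (hG : IsPGroup p G) (N M : Subgroup G) (hN : N.Normal) (hM : M.Normal)
    (h : N ≤ M ⊔ ⁅N, (⊤ : Subgroup G)⁆ ⊔ spow N p) : N ≤ M := by
  haveI := hM
  set π := QuotientGroup.mk' M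
  have hsurj : Function.Surjective π := QuotientGroup.mk'_surjective M
  set A := N.map π with hA
  have hπM : M.map π = ⊥ :=
    (Subgroup.map_eq_bot_iff _).mpr (by rw [QuotientGroup.ker_mk'])
  have hAle : A ≤ ⁅A, (⊤ : Subgroup (G ⧸ M))⁆ ⊔ spow A p := by
    calc A ≤ (M ⊔ ⁅N, (⊤ : Subgroup G)⁆ ⊔ spow N p).map π := Subgroup.map_mono h
      _ = M.map π ⊔ ⁅N, (⊤ : Subgroup G)⁆.map π ⊔ (spow N p).map π := by
          rw [Subgroup.map_sup, Subgroup.map_sup]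
      _ ≤ ⊥ ⊔ ⁅A, (⊤ : Subgroup (G ⧸ M))⁆ ⊔ spow A p := by
          refine sup_le_sup (sup_le_sup hπM.le ?_) (spow_map_le π N p)
          rw [Subgroup.map_commutator]
          exact Subgroup.commutator_mono le_rfl le_top
      _ = ⁅A, (⊤ : Subgroup (G ⧸ M))⁆ ⊔ spow A p := by rw [bot_sup_eq]
  have : A = ⊥ :=
    core_eq_bot p hp (G ⧸ M) (hG.to_quotient M) A (hN.map π hsurj) hAle
  rw [hA, Subgroup.map_eq_bot_iff _, QuotientGroup.ker_mk'] at this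
  exact this
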